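/- The cumulative distribution function of the extended occupancy distribution is nonincreasing in n: defining F(k|n, m, θ) = ∑_{r=0}^{k} Occ(r|n, m, θ), one has F(k|n+1, m, θ) = F(k|n, m, θ) − θ·((m−k)/m)·Occ(k|n, m, θ), and hence F(k|n′, m, θ) ≤ F(k|n, m, θ) whenever n ≤ n′. -/

import Mathlib

open Finset

/-- Extended occupancy mass function. -/
noncomputable def Occ (k n m : ℕ) (θ : ℝ) : ℝ :=
  (Nat.choose m k : ℝ) *
    ∑ i ∈ Finset.range (k + 1),
      (Nat.choose k i : ℝ) * (-1) ^ (k - i) * (1 - θ * ((m : ℝ) - i) / m) ^ n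

/-- Cumulative distribution function of the extended occupancy distribution. -/
noncomputable def F (k n m : ℕ) (θ : ℝ) : ℝ :=
  ∑ r ∈ Finset.range (k + 1), Occ r n m θ

noncomputable def Dop (k : ℕ) (f : ℕ → ℝ) : ℝ :=
  ∑ i ∈ Finset.range (k + 1), (Nat.choose k i : ℝ) * (-1) ^ i * f i

lemma neg_one_sq_pow (i : ℕ) : ((-1 : ℝ)) ^ i * (-1) ^ i = 1 := by
  rw [← pow_add, ← two_mul, pow_mul]
  norm_num

lemma neg_one_pow_sub_eq {i k : ℕ} (h : i ≤ k) :
    ((-1 : ℝ)) ^ (k - i) = (-1) ^ k * (-1) ^ i := by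
  obtain ⟨d, rfl⟩ := Nat.exists_eq_add_of_le h
  rw [Nat.add_sub_cancel_left]
  calc ((-1 : ℝ)) ^ d = (-1) ^ d * ((-1) ^ i * (-1) ^ i) := by rw [neg_one_sq_pow, mul_one]
    _ = ((-1) ^ d * (-1) ^ i) * (-1) ^ i := by ring
    _ = (-1) ^ (i + d) * (-1) ^ i := by rw [← pow_add, Nat.add_comm]

lemma Dop_succ (k : ℕ) (f : ℕ → ℝ) :
    Dop (k + 1) f = Dop k f - Dop k (fun i => f (i + 1)) := by
  unfold Dop
  rw [Finset.sum_range_succ' _ (k + 1)]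
  have h1 : ∑ i ∈ Finset.range (k + 1), (Nat.choose k i : ℝ) * (-1) ^ i * f i
      = (∑ i ∈ Finset.range (k + 1), (Nat.choose k (i + 1) : ℝ) * (-1) ^ (i + 1) * f (i + 1))
        + f 0 := by
    rw [Finset.sum_range_succ' _ k, Finset.sum_range_succ]
    simp
  rw [h1]
  have h2 : ∀ i ∈ Finset.range (k + 1),
      (Nat.choose (k + 1) (i + 1) : ℝ) * (-1) ^ (i + 1) * f (i + 1)
      = (Nat.choose k (i + 1) : ℝ) * (-1) ^ (i + 1) * f (i + 1)
        - (Nat.choose k i : ℝ) * (-1) ^ i * f (i + 1) := by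
    intro i _
    rw [Nat.choose_succ_succ]
    push_cast
    ring
  rw [Finset.sum_congr rfl h2, Finset.sum_sub_distrib]
  simp only [Nat.choose_zero_right, Nat.cast_one, one_mul, pow_zero]
  ring

lemma base_eq (m : ℕ) (hm : 0 < m) (θ : ℝ) (n : ℕ) :
    (fun i : ℕ => (1 - θ * ((m : ℝ) - i) / m) ^ n)
      = fun i : ℕ => ((1 - θ) + θ / m * i) ^ n := by
  have hm' : (m : ℝ) ≠ 0 := Nat.cast_ne_zero.mpr hm.ne'
  funext i
  congr 1
  field_simp
  ring

lemma Occ_eq_D (k n m : ℕ) (θ : ℝ) :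
    Occ k n m θ = (-1) ^ k * (Nat.choose m k : ℝ)
      * Dop k (fun i => (1 - θ * ((m : ℝ) - i) / m) ^ n) := by
  unfold Occ Dop
  rw [Finset.mul_sum, Finset.mul_sum]
  refine Finset.sum_congr rfl fun i hi => ?_
  rw [Finset.mem_range] at hi
  rw [neg_one_pow_sub_eq (Nat.lt_succ_iff.mp hi)]
  ring

lemma Occ_eq_D' (k n m : ℕ) (hm : 0 < m) (θ : ℝ) :
    Occ k n m θ = (-1) ^ k * (Nat.choose m k : ℝ)
      * Dop k (fun i => ((1 - θ) + θ / m * i) ^ n) := by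
  rw [Occ_eq_D, base_eq m hm θ n]

lemma occ_zero (n m : ℕ) (hm : 0 < m) (θ : ℝ) : Occ 0 n m θ = (1 - θ) ^ n := by
  unfold Occ
  have hm' : (m : ℝ) ≠ 0 := Nat.cast_ne_zero.mpr hm.ne'
  simp [mul_div_assoc, div_self hm']

lemma occ_rec (r n m : ℕ) (hr : r + 1 ≤ m) (hm : 0 < m) (θ : ℝ) :
    Occ (r + 1) (n + 1) m θ
      = (1 - θ * ((m : ℝ) - (r + 1)) / m) * Occ (r + 1) n m θ
        + θ * ((m : ℝ) - r) / m * Occ r n m θ := by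
  have hm' : (m : ℝ) ≠ 0 := Nat.cast_ne_zero.mpr hm.ne'
  -- work with the clean base
  have key : Dop (r + 1) (fun i => ((1 - θ) + θ / m * i) ^ (n + 1))
      = ((1 - θ) + θ / m * ((r : ℝ) + 1)) * Dop (r + 1) (fun i => ((1 - θ) + θ / m * i) ^ n)
        - θ / m * ((r : ℝ) + 1) * Dop r (fun i => ((1 - θ) + θ / m * i) ^ n) := by
    have hsplit : Dop (r + 1) (fun i => ((1 - θ) + θ / m * i) ^ (n + 1))
        = (1 - θ) * Dop (r + 1) (fun i => ((1 - θ) + θ / m * i) ^ n)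
          + θ / m * ∑ i ∈ Finset.range (r + 2),
              (Nat.choose (r + 1) i : ℝ) * (-1) ^ i * (i * ((1 - θ) + θ / m * i) ^ n) := by
      unfold Dop
      rw [Finset.mul_sum, Finset.mul_sum, ← Finset.sum_add_distrib]
      refine Finset.sum_congr rfl fun i hi => ?_
      simp only [pow_succ]
      ring
    have hweighted : ∑ i ∈ Finset.range (r + 2),
        (Nat.choose (r + 1) i : ℝ) * (-1) ^ i * (i * ((1 - θ) + θ / m * i) ^ n)
        = -((r : ℝ) + 1) * Dop r (fun s => ((1 - θ) + θ / m * ((s : ℝ) + 1)) ^ n) := by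
      rw [Finset.sum_range_succ' _ (r + 1)]
      have hterm : ∀ s ∈ Finset.range (r + 1),
          (Nat.choose (r + 1) (s + 1) : ℝ) * (-1) ^ (s + 1)
              * (((s + 1 : ℕ) : ℝ) * ((1 - θ) + θ / m * ((s + 1 : ℕ) : ℝ)) ^ n)
          = -((r : ℝ) + 1) * ((Nat.choose r s : ℝ) * (-1) ^ s
              * ((1 - θ) + θ / m * ((s : ℝ) + 1)) ^ n) := by
        intro s _
        have hc : ((r + 1).choose (s + 1) * (s + 1) : ℕ) = (r + 1) * Nat.choose r s := by
          rw [← Nat.add_one_mul_choose_eq]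
        have hc' : ((Nat.choose (r + 1) (s + 1) : ℝ)) * ((s : ℝ) + 1)
            = ((r : ℝ) + 1) * (Nat.choose r s : ℝ) := by exact_mod_cast hc
        push_cast
        linear_combination (-(((-1 : ℝ)) ^ s * ((1 - θ) + θ / m * ((s : ℝ) + 1)) ^ n)) * hc'
      rw [Finset.sum_congr rfl hterm]
      unfold Dop
      rw [← Finset.mul_sum]
      push_cast
      ring
    have hshift : Dop r (fun s => ((1 - θ) + θ / m * ((s : ℝ) + 1)) ^ n)
        = Dop r (fun i => ((1 - θ) + θ / m * i) ^ n)
          - Dop (r + 1) (fun i => ((1 - θ) + θ / m * i) ^ n) := by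
      have := Dop_succ r (fun i => ((1 - θ) + θ / m * i) ^ n)
      have heq : (fun s : ℕ => ((1 - θ) + θ / m * ((s : ℝ) + 1)) ^ n)
          = fun i : ℕ => ((1 - θ) + θ / m * ((i + 1 : ℕ) : ℝ)) ^ n := by
        funext i; push_cast; ring_nf
      rw [heq]
      linarith [this]
    rw [hsplit, hweighted, hshift]
    ring
  rw [Occ_eq_D' (r + 1) (n + 1) m hm θ, key, Occ_eq_D' (r + 1) n m hm θ, Occ_eq_D' r n m hm θ]
  have hc : (Nat.choose m (r + 1) * (r + 1) : ℕ) = Nat.choose m r * (m - r) :=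
    Nat.choose_succ_right_eq m r
  have hchoose : (Nat.choose m (r + 1) : ℝ) * ((r : ℝ) + 1)
      = (Nat.choose m r : ℝ) * ((m : ℝ) - r) := by
    have h2 : (Nat.choose m (r + 1) : ℝ) * ((r : ℝ) + 1)
        = (Nat.choose m r : ℝ) * (((m - r : ℕ) : ℝ)) := by exact_mod_cast hc
    rw [h2, Nat.cast_sub (Nat.le_of_succ_le hr)]
  have hcoef : 1 - θ * ((m : ℝ) - ((r : ℝ) + 1)) / m = (1 - θ) + θ / m * ((r : ℝ) + 1) := by
    field_simp
    ring
  rw [hcoef]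
  linear_combination (((-1 : ℝ)) ^ r * Dop r (fun i => ((1 - θ) + θ / m * i) ^ n) * θ / m) * hchoose

lemma occ_nonneg (m : ℕ) (hm : 0 < m) (θ : ℝ) (hθ0 : 0 < θ) (hθ1 : θ ≤ 1) :
    ∀ n, ∀ r, r ≤ m → 0 ≤ Occ r n m θ := by
  have hm' : (m : ℝ) ≠ 0 := Nat.cast_ne_zero.mpr hm.ne'
  have hmpos : (0 : ℝ) < m := by exact_mod_cast hm
  intro n
  induction n with
  | zero =>
    intro r hr
    rcases Nat.eq_zero_or_pos r with h0 | hpos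
    · subst h0; unfold Occ; simp
    · unfold Occ
      have h2 : ∑ i ∈ Finset.range (r + 1),
          (Nat.choose r i : ℝ) * (-1) ^ (r - i) * (1 - θ * ((m : ℝ) - i) / m) ^ 0
          = (-1) ^ r * ∑ i ∈ Finset.range (r + 1), ((-1 : ℝ)) ^ i * Nat.choose r i := by
        rw [Finset.mul_sum]
        refine Finset.sum_congr rfl fun i hi => ?_
        rw [Finset.mem_range] at hi
        rw [neg_one_pow_sub_eq (Nat.lt_succ_iff.mp hi)]
        ring
      have h3 : ∑ i ∈ Finset.range (r + 1), ((-1 : ℝ)) ^ i * Nat.choose r i = 0 := by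
        have hint : ((∑ i ∈ Finset.range (r + 1), (-1 : ℤ) ^ i * Nat.choose r i : ℤ) : ℝ)
            = ∑ i ∈ Finset.range (r + 1), ((-1 : ℝ)) ^ i * Nat.choose r i := by
          push_cast; rfl
        rw [← hint, Int.alternating_sum_range_choose, if_neg hpos.ne']
        simp
      rw [h2, h3]
      simp
  | succ n ih =>
    intro r hr
    rcases Nat.eq_zero_or_pos r with h0 | hpos
    · subst h0
      rw [occ_zero _ _ hm]
      have : (0 : ℝ) ≤ 1 - θ := by linarith
      positivity
    · obtain ⟨s, rfl⟩ := Nat.exists_eq_succ_of_ne_zero hpos.ne'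
      rw [occ_rec s n m hr hm θ]
      have hle : ((s : ℝ) + 1) ≤ m := by exact_mod_cast hr
      have h1 : (0 : ℝ) ≤ 1 - θ * ((m : ℝ) - ((s : ℕ) + 1)) / m := by
        have h2 : θ * ((m : ℝ) - ((s : ℝ) + 1)) / m ≤ 1 := by
          rw [div_le_one hmpos]
          nlinarith
        push_cast
        linarith
      have h2 : (0 : ℝ) ≤ θ * ((m : ℝ) - s) / m := by
        have hs : (0 : ℝ) ≤ (m : ℝ) - s := by linarith
        positivity
      have ha := ih (s + 1) hr
      have hb := ih s (Nat.le_of_succ_le hr)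
      push_cast at h1
      exact add_nonneg (mul_nonneg h1 ha) (mul_nonneg h2 hb)

lemma F_rec (m : ℕ) (hm : 0 < m) (θ : ℝ) :
    ∀ k, k ≤ m → ∀ n, F k (n + 1) m θ = F k n m θ - θ * (((m : ℝ) - k) / m) * Occ k n m θ := by
  have hm' : (m : ℝ) ≠ 0 := Nat.cast_ne_zero.mpr hm.ne'
  intro k
  induction k with
  | zero =>
    intro _ n
    unfold F
    simp only [zero_add, Finset.sum_range_one, Nat.cast_zero, sub_zero]
    rw [occ_zero _ _ hm, occ_zero _ _ hm, div_self hm', pow_succ]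
    ring
  | succ k ih =>
    intro hk n
    have hk' : k ≤ m := Nat.le_of_succ_le hk
    unfold F
    rw [Finset.sum_range_succ (fun r => Occ r (n + 1) m θ) (k + 1),
        Finset.sum_range_succ (fun r => Occ r n m θ) (k + 1)]
    have hF := ih hk' n
    unfold F at hF
    rw [hF, occ_rec k n m hk hm θ]
    push_cast
    ring

theorem occupancy_cdf_nonincreasing_in_n (m k : ℕ) (hm : 0 < m) (hk : k ≤ m)
    (θ : ℝ) (hθ0 : 0 < θ) (hθ1 : θ ≤ 1) :
    (∀ n : ℕ, F k (n + 1) m θ = F k n m θ - θ * (((m : ℝ) - k) / m) * Occ k n m θ) ∧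
      ∀ n n' : ℕ, n ≤ n' → F k n' m θ ≤ F k n m θ := by
  have hrec := fun n => F_rec m hm θ k hk n
  refine ⟨hrec, ?_⟩
  have hstep : ∀ n : ℕ, F k (n + 1) m θ ≤ F k n m θ := by
    intro n
    rw [hrec n]
    have h1 : (0 : ℝ) ≤ ((m : ℝ) - k) / m := by
      have hle : (k : ℝ) ≤ m := by exact_mod_cast hk
      have hmpos : (0 : ℝ) < m := by exact_mod_cast hm
      have h : (0 : ℝ) ≤ (m : ℝ) - k := by linarith
      positivity
    have h2 := occ_nonneg m hm θ hθ0 hθ1 n k hk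
    have := mul_nonneg (mul_nonneg hθ0.le h1) h2
    linarith
  intro n n' hnn
  induction n', hnn using Nat.le_induction with
  | base => exact le_refl _
  | succ n' hn ih => exact (hstep n').trans ih
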